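/- Let A be a d×d real matrix, h ∈ ℕ with h ≥ 1, and β_1, …, β_h real numbers with 0 ≤ β_i ≤ β for all i, where β h ≤ 1. Then ‖ ∏_{i=1}^{h} (I_d − β_i A) − I_d + ( Σ_{i=1}^{h} β_i ) A ‖ ≤ (1/2) β² h² ‖A‖² e^{‖A‖}, where ‖·‖ is the spectral norm and the product is taken in any fixed order (the factors commute). -/

import Mathlib

open Matrix

/-- The spectral norm (Euclidean operator norm) of a real square matrix. -/
noncomputable def specNorm {d : ℕ} (M : Matrix (Fin d) (Fin d) ℝ) : ℝ :=
  ‖(Matrix.toEuclideanCLM (𝕜 := ℝ) M :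
      EuclideanSpace ℝ (Fin d) →L[ℝ] EuclideanSpace ℝ (Fin d))‖

private lemma list_norm_sum_le {R : Type*} [SeminormedAddCommGroup R] :
    ∀ l : List R, ‖l.sum‖ ≤ (l.map norm).sum := by
  intro l
  induction l with
  | nil => simp
  | cons x l ih =>
    simp only [List.sum_cons, List.map_cons]
    exact (norm_add_le _ _).trans (by linarith)

private lemma one_le_prod_one_add :
    ∀ l : List ℝ, (∀ x ∈ l, 0 ≤ x) → 1 ≤ (l.map (fun t => 1 + t)).prod := by
  intro l
  induction l with
  | nil => simp
  | cons x l ih =>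
    intro hl
    simp only [List.map_cons, List.prod_cons]
    have h1 : (0:ℝ) ≤ x := hl x (by simp)
    have h2 := ih (fun y hy => hl y (by simp [hy]))
    nlinarith

private lemma prod_one_add_le_exp :
    ∀ l : List ℝ, (∀ x ∈ l, 0 ≤ x) → (l.map (fun t => 1 + t)).prod ≤ Real.exp l.sum := by
  intro l
  induction l with
  | nil => simp
  | cons x l ih =>
    intro hl
    simp only [List.map_cons, List.prod_cons, List.sum_cons, Real.exp_add]
    have h1 : (0:ℝ) ≤ x := hl x (by simp)
    have h2 := ih (fun y hy => hl y (by simp [hy]))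
    have h3 : (1:ℝ) + x ≤ Real.exp x := by linarith [Real.add_one_le_exp x]
    have h4 : (1:ℝ) ≤ (l.map (fun t => 1 + t)).prod :=
      one_le_prod_one_add l (fun y hy => hl y (by simp [hy]))
    have h5 : (0:ℝ) < Real.exp x := Real.exp_pos x
    nlinarith

private lemma key_bound {R : Type*} [NormedRing R] (h1 : ‖(1:R)‖ ≤ 1) :
    ∀ l : List R,
      ‖(l.map (fun x => (1:R) + x)).prod - 1 - l.sum‖ ≤
        1 / 2 * ((l.map norm).sum) ^ 2 * ((l.map (fun x => 1 + ‖x‖)).prod) := by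
  intro l
  induction l with
  | nil => simp
  | cons x l ih =>
    simp only [List.map_cons, List.prod_cons, List.sum_cons]
    set P := (l.map (fun x => (1:R) + x)).prod with hP
    set S := l.sum with hS
    set s := (l.map norm).sum with hs
    set p := (l.map (fun x => 1 + ‖x‖)).prod with hp
    have hrw : (1 + x) * P - 1 - (x + S) = (1 + x) * (P - 1 - S) + x * S := by
      noncomm_ring
    have hx : (0:ℝ) ≤ ‖x‖ := norm_nonneg x
    have hsnn : (0:ℝ) ≤ s := by
      rw [hs]
      exact List.sum_nonneg (by simp only [List.mem_map]; rintro _ ⟨y, _, rfl⟩; exact norm_nonneg y)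
    have hpge : (1:ℝ) ≤ p := by
      have := one_le_prod_one_add (l.map norm)
        (by simp only [List.mem_map]; rintro _ ⟨y, _, rfl⟩; exact norm_nonneg y)
      simpa [List.map_map, Function.comp_def] using this
    have hSs : ‖S‖ ≤ s := list_norm_sum_le l
    have h1x : ‖(1:R) + x‖ ≤ 1 + ‖x‖ := (norm_add_le _ _).trans (by linarith)
    have h6 : (1:ℝ) ≤ (1 + ‖x‖) * p := by nlinarith
    calc ‖(1 + x) * P - 1 - (x + S)‖ = ‖(1 + x) * (P - 1 - S) + x * S‖ := by rw [hrw]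
      _ ≤ ‖(1 + x) * (P - 1 - S)‖ + ‖x * S‖ := norm_add_le _ _
      _ ≤ ‖(1:R) + x‖ * ‖P - 1 - S‖ + ‖x‖ * ‖S‖ :=
          add_le_add (norm_mul_le _ _) (norm_mul_le _ _)
      _ ≤ (1 + ‖x‖) * (1 / 2 * s ^ 2 * p) + ‖x‖ * s :=
          add_le_add (mul_le_mul h1x ih (norm_nonneg _) (by linarith))
            (mul_le_mul_of_nonneg_left hSs hx)
      _ ≤ 1 / 2 * (‖x‖ + s) ^ 2 * ((1 + ‖x‖) * p) := by
          nlinarith [mul_nonneg (mul_nonneg hx hsnn) (sub_nonneg.mpr h6),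
            mul_nonneg (mul_nonneg hx hx) (zero_le_one.trans h6)]

set_option maxHeartbeats 1000000 in
/-- For a `d×d` real matrix `A`, `h ≥ 1` and `0 ≤ β_i ≤ β` with `βh ≤ 1`,
`‖∏_{i=1}^h (I − β_i A) − I + (∑_i β_i) A‖ ≤ (1/2) β² h² ‖A‖² e^{‖A‖}` in spectral norm. -/
theorem deterministic_product_second_order_bound {d : ℕ} (A : Matrix (Fin d) (Fin d) ℝ)
    (h : ℕ) (hh : 1 ≤ h) (β : ℝ) (βs : Fin h → ℝ)
    (hβs : ∀ i, 0 ≤ βs i ∧ βs i ≤ β) (hβh : β * (h : ℝ) ≤ 1) :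
    specNorm
        ((List.ofFn (fun i : Fin h => (1 : Matrix (Fin d) (Fin d) ℝ) - βs i • A)).prod
          - 1 + (∑ i, βs i) • A) ≤
      (1 / 2) * β ^ 2 * (h : ℝ) ^ 2 * specNorm A ^ 2 * Real.exp (specNorm A) := by
  classical
  set φ := (Matrix.toEuclideanCLM (𝕜 := ℝ) (n := Fin d))
  set a : EuclideanSpace ℝ (Fin d) →L[ℝ] EuclideanSpace ℝ (Fin d) := φ A with ha
  set l : List (EuclideanSpace ℝ (Fin d) →L[ℝ] EuclideanSpace ℝ (Fin d)) :=
    List.ofFn (fun i : Fin h => -(βs i • a)) with hl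
  have hβ0 : 0 ≤ β := le_trans (hβs ⟨0, hh⟩).1 (hβs ⟨0, hh⟩).2
  have hφ : φ ((List.ofFn (fun i : Fin h => (1 : Matrix (Fin d) (Fin d) ℝ) - βs i • A)).prod
      - 1 + (∑ i, βs i) • A) = (l.map (fun x => 1 + x)).prod - 1 - l.sum := by
    have h1 : φ (List.ofFn (fun i : Fin h =>
        (1 : Matrix (Fin d) (Fin d) ℝ) - βs i • A)).prod =
        (l.map (fun x => 1 + x)).prod := by
      rw [map_list_prod, List.map_ofFn, hl, List.map_ofFn]
      have : (⇑φ ∘ fun i : Fin h => (1 : Matrix (Fin d) (Fin d) ℝ) - βs i • A) =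
          ((fun x => 1 + x) ∘ fun i : Fin h => -(βs i • a)) := by
        funext i
        simp [Function.comp, map_sub, _root_.map_smul, sub_eq_add_neg, ha]
      rw [this]
    have h2 : l.sum = -((∑ i, βs i) • a) := by
      rw [hl, List.sum_ofFn]
      rw [Finset.sum_neg_distrib, ← Finset.sum_smul]
    rw [map_add, map_sub, _root_.map_one, _root_.map_smul, h1, h2, ← ha]
    abel
  have hnorm1 : ‖(1 : EuclideanSpace ℝ (Fin d) →L[ℝ] EuclideanSpace ℝ (Fin d))‖ ≤ 1 :=
    ContinuousLinearMap.norm_id_le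
  have hkey := key_bound hnorm1 l
  have hspec : specNorm ((List.ofFn (fun i : Fin h =>
      (1 : Matrix (Fin d) (Fin d) ℝ) - βs i • A)).prod - 1 + (∑ i, βs i) • A) =
      ‖(l.map (fun x => 1 + x)).prod - 1 - l.sum‖ := by
    rw [specNorm, hφ]
  have hA : specNorm A = ‖a‖ := rfl
  rw [hspec, hA]
  set s := (l.map norm).sum with hs
  set p := (l.map (fun x => 1 + ‖x‖)).prod with hp
  have hsval : s = (∑ i, βs i) * ‖a‖ := by
    rw [hs, hl, List.map_ofFn, List.sum_ofFn, Finset.sum_mul]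
    congr 1
    funext i
    simp only [Function.comp_apply]
    rw [norm_neg]
    exact norm_smul_of_nonneg (hβs i).1 a
  have hsum_le : (∑ i, βs i) ≤ β * h := by
    calc (∑ i, βs i) ≤ ∑ _i : Fin h, β := Finset.sum_le_sum (fun i _ => (hβs i).2)
      _ = β * h := by simp [mul_comm]
  have hsum_nn : 0 ≤ (∑ i, βs i) := Finset.sum_nonneg (fun i _ => (hβs i).1)
  have hs_le : s ≤ β * h * ‖a‖ := by
    rw [hsval]; exact mul_le_mul_of_nonneg_right hsum_le (norm_nonneg a)
  have hs_nn : 0 ≤ s := by rw [hsval]; positivity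
  have hs_le_a : s ≤ ‖a‖ := by
    calc s ≤ β * h * ‖a‖ := hs_le
      _ ≤ 1 * ‖a‖ := mul_le_mul_of_nonneg_right hβh (norm_nonneg a)
      _ = ‖a‖ := one_mul _
  have hp_le : p ≤ Real.exp ‖a‖ := by
    have h7 := prod_one_add_le_exp (l.map norm)
      (by simp only [List.mem_map]; rintro _ ⟨y, _, rfl⟩; exact norm_nonneg y)
    have h8 : p ≤ Real.exp s := by
      simpa [List.map_map, Function.comp_def, ← hs, ← hp] using h7
    calc p ≤ Real.exp s := h8
      _ ≤ Real.exp ‖a‖ := Real.exp_le_exp.2 hs_le_a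
  have hp_nn : 0 ≤ p := by
    have := one_le_prod_one_add (l.map norm)
      (by simp only [List.mem_map]; rintro _ ⟨y, _, rfl⟩; exact norm_nonneg y)
    have h9 : (1:ℝ) ≤ p := by simpa [List.map_map, Function.comp_def] using this
    linarith
  calc ‖(l.map (fun x => 1 + x)).prod - 1 - l.sum‖ ≤ 1 / 2 * s ^ 2 * p := hkey
    _ ≤ 1 / 2 * (β * h * ‖a‖) ^ 2 * Real.exp ‖a‖ := by
        have hsq : s ^ 2 ≤ (β * h * ‖a‖) ^ 2 := by
          apply pow_le_pow_left₀ hs_nn hs_le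
        have he : (0:ℝ) < Real.exp ‖a‖ := Real.exp_pos _
        nlinarith
    _ = 1 / 2 * β ^ 2 * (h : ℝ) ^ 2 * ‖a‖ ^ 2 * Real.exp ‖a‖ := by ring
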